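/- Let f : {0,1}ⁿ → {0,1} and g : {0,1}ⁿ × {0,1}ᵐ → {0,1} be Boolean functions such that every satisfying assignment of g projected to the first n coordinates satisfies f, and every satisfying assignment of f extends to a satisfying assignment of g. Then the function g' obtained from g by setting all of the last m inputs to true within a monotone combination is, in general, not equal to f; however, if g is computed by a decomposable negation normal form circuit D, then the circuit D' obtained from D by replacing every literal of the last m variables with the constant true computes exactly the projection of g to the first n variables; that is, an assignment a ∈ {0,1}ⁿ satisfies D' if and only if there exists b ∈ {0,1}ᵐ with g(a,b) = 1. -/

import Mathlib

/-- Negation normal form circuits: constants, literals, AND, OR. -/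
inductive NNF (V : Type) where
  | tru : NNF V
  | fls : NNF V
  | lit (v : V) (b : Bool) : NNF V
  | and (l r : NNF V) : NNF V
  | or (l r : NNF V) : NNF V

def NNF.eval {V : Type} (a : V → Bool) : NNF V → Bool
  | .tru => true
  | .fls => false
  | .lit v b => a v == b
  | .and l r => l.eval a && r.eval a
  | .or l r => l.eval a || r.eval a

def NNF.vars {V : Type} [DecidableEq V] : NNF V → Finset V
  | .tru => ∅
  | .fls => ∅
  | .lit v _ => {v}
  | .and l r => l.vars ∪ r.vars
  | .or l r => l.vars ∪ r.vars

/-- Decomposability: the inputs of every AND gate have disjoint variable sets. -/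
def NNF.Decomposable {V : Type} [DecidableEq V] : NNF V → Prop
  | .and l r => Disjoint l.vars r.vars ∧ l.Decomposable ∧ r.Decomposable
  | .or l r => l.Decomposable ∧ r.Decomposable
  | _ => True

/-- Replace every literal of the last `m` variables by the constant `true`. -/
def NNF.forget {n m : ℕ} : NNF (Fin n ⊕ Fin m) → NNF (Fin n ⊕ Fin m)
  | .tru => .tru
  | .fls => .fls
  | .lit (Sum.inl i) b => .lit (Sum.inl i) b
  | .lit (Sum.inr _) _ => .tru
  | .and l r => .and l.forget r.forget
  | .or l r => .or l.forget r.forget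

lemma NNF.eval_congr {V : Type} [DecidableEq V] (D : NNF V) (a a' : V → Bool)
    (h : ∀ v ∈ D.vars, a v = a' v) : D.eval a = D.eval a' := by
  induction D with
  | tru => rfl
  | fls => rfl
  | lit v b => simp [NNF.eval, h v (by simp [NNF.vars])]
  | and l r ihl ihr =>
      simp only [NNF.eval]
      rw [ihl (fun v hv => h v (by simp [NNF.vars, hv])),
        ihr (fun v hv => h v (by simp [NNF.vars, hv]))]
  | or l r ihl ihr =>
      simp only [NNF.eval]
      rw [ihl (fun v hv => h v (by simp [NNF.vars, hv])),
        ihr (fun v hv => h v (by simp [NNF.vars, hv]))]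

lemma NNF.forget_no_inr {n m : ℕ} (D : NNF (Fin n ⊕ Fin m)) (j : Fin m) :
    Sum.inr j ∉ D.forget.vars := by
  induction D with
  | tru => simp [NNF.forget, NNF.vars]
  | fls => simp [NNF.forget, NNF.vars]
  | lit v b =>
      cases v with
      | inl i => simp [NNF.forget, NNF.vars]
      | inr k => simp [NNF.forget, NNF.vars]
  | and l r ihl ihr => simp [NNF.forget, NNF.vars, ihl, ihr]
  | or l r ihl ihr => simp [NNF.forget, NNF.vars, ihl, ihr]

lemma NNF.forget_eval_indep {n m : ℕ} (D : NNF (Fin n ⊕ Fin m))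
    (a : Fin n → Bool) (b b' : Fin m → Bool) :
    D.forget.eval (Sum.elim a b) = D.forget.eval (Sum.elim a b') := by
  apply NNF.eval_congr
  intro v hv
  cases v with
  | inl i => rfl
  | inr j => exact absurd hv (NNF.forget_no_inr D j)

lemma NNF.eval_le_forget {n m : ℕ} (D : NNF (Fin n ⊕ Fin m))
    (c : Fin n ⊕ Fin m → Bool) (h : D.eval c = true) :
    D.forget.eval c = true := by
  induction D with
  | tru => rfl
  | fls => exact h
  | lit v b =>
      cases v with
      | inl i => exact h
      | inr k => rfl
  | and l r ihl ihr =>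
      simp only [NNF.eval, NNF.forget, Bool.and_eq_true] at h ⊢
      exact ⟨ihl h.1, ihr h.2⟩
  | or l r ihl ihr =>
      simp only [NNF.eval, NNF.forget, Bool.or_eq_true] at h ⊢
      rcases h with h | h
      · exact Or.inl (ihl h)
      · exact Or.inr (ihr h)

theorem dnnf_projection {n m : ℕ} (D : NNF (Fin n ⊕ Fin m))
    (hD : D.Decomposable) (a : Fin n → Bool) (b₀ : Fin m → Bool) :
    D.forget.eval (Sum.elim a b₀) = true ↔
      ∃ b : Fin m → Bool, D.eval (Sum.elim a b) = true := by
  constructor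
  · intro h
    induction D with
    | tru => exact ⟨b₀, rfl⟩
    | fls => exact absurd h (by simp [NNF.forget, NNF.eval])
    | lit v b =>
        cases v with
        | inl i => exact ⟨b₀, h⟩
        | inr k => exact ⟨fun _ => b, by simp [NNF.eval]⟩
    | and l r ihl ihr =>
        obtain ⟨hdisj, hl, hr⟩ := hD
        simp only [NNF.forget, NNF.eval, Bool.and_eq_true] at h
        obtain ⟨b₁, hb₁⟩ := ihl hl h.1
        obtain ⟨b₂, hb₂⟩ := ihr hr h.2
        refine ⟨fun j => if Sum.inr j ∈ l.vars then b₁ j else b₂ j, ?_⟩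
        simp only [NNF.eval, Bool.and_eq_true]
        constructor
        · rw [← hb₁]
          apply NNF.eval_congr
          intro v hv
          cases v with
          | inl i => rfl
          | inr j => simp [hv]
        · rw [← hb₂]
          apply NNF.eval_congr
          intro v hv
          cases v with
          | inl i => rfl
          | inr j =>
              have : Sum.inr j ∉ l.vars := fun hc =>
                (Finset.disjoint_left.mp hdisj hc) hv
              simp [this]
    | or l r ihl ihr =>
        obtain ⟨hl, hr⟩ := hD
        simp only [NNF.forget, NNF.eval, Bool.or_eq_true] at h
        rcases h with h | h
        · obtain ⟨b, hb⟩ := ihl hl h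
          exact ⟨b, by simp [NNF.eval, hb]⟩
        · obtain ⟨b, hb⟩ := ihr hr h
          exact ⟨b, by simp [NNF.eval, hb]⟩
  · rintro ⟨b, hb⟩
    rw [NNF.forget_eval_indep D a b₀ b]
    exact NNF.eval_le_forget D _ hb
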